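/- arXiv:1403.6299 — 5 statements merged into one kernel-verified Lean document; each statement's English description precedes it below -/
import Mathlib

section
/- Let M² > 0 be a real number, θ ∈ ℝ with cos θ > 0, and let ρ : ℝ → ℝ be continuous and nonnegative on [0,∞) with a polynomial bound: there exist C ≥ 0 and p ≥ 0 such that 0 ≤ ρ(s) ≤ C(1+s)^p for all s ≥ 0. Then: (i) for every natural number n with n > p, the function s ↦ (1 + s e^{−iθ}/(n M²))^{−(n+1)} ρ(s) is integrable on (0,∞); (ii) the function s ↦ exp(−s e^{−iθ}/M²) ρ(s) is integrable on (0,∞); and (iii) lim_{n→∞} ∫₀^∞ (1 + s e^{−iθ}/(n M²))^{−(n+1)} ρ(s) ds = ∫₀^∞ exp(−s e^{−iθ}/M²) ρ(s) ds. -/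
open MeasureTheory Filter Complex Real Set

/-- Bernoulli-type monotonicity: for `n ≥ 2N`, `(1+x/(2N))^N ≤ (1+x/n)^(n+1)`. -/
lemma borel_aux_pow_mono (N n : ℕ) (hN : 1 ≤ N) (hn : 2 * N ≤ n) (x : ℝ) (hx : 0 ≤ x) :
    (1 + x / (2 * N)) ^ N ≤ (1 + x / n) ^ (n + 1) := by
  have hn1 : 1 ≤ n := le_trans (by omega) hn
  have hnR : (0:ℝ) < n := by exact_mod_cast hn1
  have hNR : (0:ℝ) < N := by exact_mod_cast hN
  set k := n / N with hk
  have hk1 : 1 ≤ k := (Nat.one_le_div_iff (by omega)).2 (by omega)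
  have hkn : k * N ≤ n := Nat.div_mul_le_self n N
  have hn2Nk : n ≤ 2 * N * k := by
    have hmod := Nat.div_add_mod n N
    have hmodlt : n % N < N := Nat.mod_lt _ (by omega)
    have hNk : N ≤ N * k := Nat.le_mul_of_pos_right N (by omega)
    calc n = N * k + n % N := (Nat.div_add_mod n N).symm
      _ ≤ N * k + N := Nat.add_le_add_left hmodlt.le _
      _ ≤ N * k + N * k := Nat.add_le_add_left hNk _
      _ = 2 * N * k := by ring
  have hkR : (0:ℝ) < k := by exact_mod_cast hk1
  have step1 : (1 + x / (2 * N)) ^ N ≤ (1 + (k:ℝ) * (x / n)) ^ N := by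
    apply pow_le_pow_left₀ (by positivity)
    have h1 : x / (2 * N) ≤ (k:ℝ) * (x / n) := by
      rw [div_le_iff₀ (by positivity)]
      rw [mul_comm ((k:ℝ)) (x / (n:ℝ)), div_mul_eq_mul_div, div_mul_eq_mul_div,
        le_div_iff₀ hnR]
      have : (n:ℝ) ≤ 2 * N * k := by exact_mod_cast hn2Nk
      nlinarith
    linarith
  have step2 : (1 + (k:ℝ) * (x / n)) ^ N ≤ ((1 + x / n) ^ k) ^ N := by
    apply pow_le_pow_left₀ (by positivity)
    have h0 : (0:ℝ) ≤ x / n := by positivity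
    have hge : (-2:ℝ) ≤ x / n := by linarith
    exact one_add_mul_le_pow hge k
  have step3 : ((1 + x / n) ^ k) ^ N ≤ (1 + x / n) ^ (n + 1) := by
    rw [← pow_mul]
    have h1 : (1:ℝ) ≤ 1 + x / n := by
      have := div_nonneg hx hnR.le
      linarith
    apply pow_le_pow_right₀ h1
    omega
  linarith

/-- Complex `(1 + a/n)^{-(n+1)} → exp(-a)` for `Re a > 0`. -/
lemma borel_aux_tendsto (a : ℂ) (ha : 0 < a.re) :
    Tendsto (fun n : ℕ => ((1:ℂ) + a / n) ^ (-((n:ℤ) + 1))) atTop (nhds (Complex.exp (-a))) := by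
  have ha0 : a ≠ 0 := fun h => by simp [h] at ha
  -- derivative of log(1+z) at 0
  have hd : HasDerivAt (fun z : ℂ => Complex.log (1 + z)) 1 0 := by
    have h1 : HasDerivAt (fun z : ℂ => (1:ℂ) + z) 1 0 := (hasDerivAt_id 0).const_add 1
    have h2 : HasDerivAt Complex.log ((1:ℂ) + 0)⁻¹ ((1:ℂ) + 0) :=
      Complex.hasDerivAt_log (by norm_num [Complex.mem_slitPlane_iff])
    have h3 := h2.comp 0 h1
    simp only [add_zero, inv_one, one_mul] at h3
    exact h3
  rw [hasDerivAt_iff_tendsto_slope] at hd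
  have hslope : ∀ z : ℂ, slope (fun z : ℂ => Complex.log (1 + z)) 0 z
      = Complex.log (1 + z) / z := by
    intro z
    simp [slope_def_field]
  have hto0 : Tendsto (fun n : ℕ => a / n) atTop (nhdsWithin (0:ℂ) {(0:ℂ)}ᶜ) := by
    apply tendsto_nhdsWithin_of_tendsto_nhds_of_eventually_within
    · have h1 : Tendsto (fun n : ℕ => ((n:ℝ)⁻¹ : ℝ)) atTop (nhds 0) :=
        tendsto_inv_atTop_nhds_zero_nat
      have h2 : Tendsto (fun n : ℕ => (((n:ℝ)⁻¹ : ℝ) : ℂ)) atTop (nhds 0) := by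
        have h3 := (Complex.continuous_ofReal.tendsto 0).comp h1
        simp only [Complex.ofReal_zero] at h3
        exact h3
      have := h2.const_mul a
      simp only [mul_zero] at this
      refine this.congr fun n => ?_
      push_cast
      rw [div_eq_mul_inv]
    · filter_upwards [eventually_ge_atTop 1] with n hn
      simp only [Set.mem_compl_iff, Set.mem_singleton_iff]
      exact div_ne_zero ha0 (Nat.cast_ne_zero.mpr (by omega))
  have hcomp : Tendsto (fun n : ℕ => Complex.log (1 + a / n) / (a / n)) atTop (nhds 1) := by
    have := hd.comp hto0
    refine this.congr fun n => ?_
    simp [Function.comp, hslope]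
  have hlog : Tendsto (fun n : ℕ => (n:ℂ) * Complex.log (1 + a / n)) atTop (nhds a) := by
    have := hcomp.const_mul a
    rw [mul_one] at this
    apply this.congr'
    filter_upwards [eventually_ge_atTop 1] with n hn
    have hnne : (n:ℂ) ≠ 0 := Nat.cast_ne_zero.mpr (by omega)
    field_simp
  have hpow : Tendsto (fun n : ℕ => ((1:ℂ) + a / n) ^ n) atTop (nhds (Complex.exp a)) := by
    have hexp : Tendsto (fun n : ℕ => Complex.exp ((n:ℂ) * Complex.log (1 + a / n))) atTop
        (nhds (Complex.exp a)) := (Complex.continuous_exp.tendsto a).comp hlog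
    apply hexp.congr'
    filter_upwards [eventually_ge_atTop 1] with n hn
    have hne : (1:ℂ) + a / n ≠ 0 := by
      intro h
      have hre : ((1:ℂ) + a / n).re = 1 + a.re / n := by
        have : (a / (n:ℂ)) = a / ((n:ℝ):ℂ) := by push_cast; ring
        rw [Complex.add_re, this, Complex.div_ofReal_re, Complex.one_re]
      rw [h] at hre
      simp only [Complex.zero_re] at hre
      have : (0:ℝ) < 1 + a.re / n := by positivity
      linarith
    rw [Complex.exp_nat_mul, Complex.exp_log hne]
  have hone : Tendsto (fun n : ℕ => ((1:ℂ) + a / n)) atTop (nhds 1) := by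
    have h2 : Tendsto (fun n : ℕ => a / n) atTop (nhds 0) :=
      hto0.mono_right nhdsWithin_le_nhds
    simpa using (tendsto_const_nhds (x := (1:ℂ))).add h2
  have hmul : Tendsto (fun n : ℕ => ((1:ℂ) + a / n) ^ (n + 1)) atTop
      (nhds (Complex.exp a)) := by
    have := hpow.mul hone
    rw [mul_one] at this
    exact this.congr fun n => (pow_succ _ _).symm
  have hinv := hmul.inv₀ (Complex.exp_ne_zero a)
  rw [← Complex.exp_neg] at hinv
  refine hinv.congr fun n => ?_
  rw [show -((n:ℤ) + 1) = -((n + 1 : ℕ) : ℤ) by push_cast; ring, zpow_neg, zpow_natCast]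

/-- Integrability of `(1+s)^p / (1+s d)^m` type functions. -/
lemma borel_aux_integrable (C p d : ℝ) (hC : 0 ≤ C) (hp : 0 ≤ p) (hd : 0 < d)
    (m : ℕ) (hm : p + 1 < m) :
    IntegrableOn (fun s : ℝ => C * (1 + s) ^ p * ((1 + s * d) ^ m)⁻¹) (Set.Ioi 0) := by
  set e := min 1 d with he
  have he0 : 0 < e := lt_min one_pos hd
  have key : ∀ s : ℝ, 0 ≤ s → C * (1 + s) ^ p * ((1 + s * d) ^ m)⁻¹
      ≤ C * (e ^ m)⁻¹ * (1 + s) ^ (p - m) := by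
    intro s hs
    have h1 : e * (1 + s) ≤ 1 + s * d := by
      have h1a : e ≤ 1 := min_le_left _ _
      have h1b : e ≤ d := min_le_right _ _
      nlinarith
    have h1s : (0:ℝ) < 1 + s := by linarith
    have h2 : (e * (1 + s)) ^ m ≤ (1 + s * d) ^ m :=
      pow_le_pow_left₀ (by positivity) h1 m
    have h3 : ((1 + s * d) ^ m)⁻¹ ≤ ((e * (1 + s)) ^ m)⁻¹ := by
      apply inv_anti₀ (by positivity) h2
    have h4 : ((e * (1 + s)) ^ m)⁻¹ = (e ^ m)⁻¹ * ((1 + s) ^ m)⁻¹ := by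
      rw [mul_pow, mul_inv]
    have h5 : (1 + s) ^ p * ((1 + s) ^ m)⁻¹ = (1 + s) ^ (p - m) := by
      rw [← Real.rpow_natCast (1 + s) m, ← Real.rpow_neg h1s.le, ← Real.rpow_add h1s]
      ring_nf
    calc C * (1 + s) ^ p * ((1 + s * d) ^ m)⁻¹
        ≤ C * (1 + s) ^ p * ((e ^ m)⁻¹ * ((1 + s) ^ m)⁻¹) := by
          rw [h4] at h3
          apply mul_le_mul_of_nonneg_left h3 (by positivity)
      _ = C * (e ^ m)⁻¹ * ((1 + s) ^ p * ((1 + s) ^ m)⁻¹) := by ring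
      _ = C * (e ^ m)⁻¹ * (1 + s) ^ (p - m) := by rw [h5]
  have hq : p - m < -1 := by linarith
  -- integrability of (1+s)^(p-m) on Ioi 0
  have hint : IntegrableOn (fun s : ℝ => (1 + s) ^ (p - m)) (Set.Ioi 0) := by
    have hunion : Set.Ioi (0:ℝ) = Set.Ioc 0 1 ∪ Set.Ioi 1 := (Set.Ioc_union_Ioi_eq_Ioi zero_le_one).symm
    rw [hunion]
    apply IntegrableOn.union
    · have hcont : ContinuousOn (fun s : ℝ => (1 + s) ^ (p - m)) (Set.Icc 0 1) := by
        apply ContinuousOn.rpow_const (by fun_prop)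
        intro s hs
        left
        have := hs.1
        intro h; linarith [h ▸ (by linarith : (0:ℝ) < 1 + s)]
      exact (hcont.integrableOn_Icc).mono_set Set.Ioc_subset_Icc_self
    · have hbase : IntegrableOn (fun s : ℝ => s ^ (p - m)) (Set.Ioi 1) :=
        integrableOn_Ioi_rpow_of_lt hq one_pos
      apply Integrable.mono' hbase
      · apply ContinuousOn.aestronglyMeasurable _ measurableSet_Ioi
        apply ContinuousOn.rpow_const (by fun_prop)
        intro s hs
        left
        intro h; rw [Set.mem_Ioi] at hs; linarith [h ▸ (by linarith : (0:ℝ) < 1 + s)]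
      · rw [ae_restrict_iff' measurableSet_Ioi]
        filter_upwards with s hs
        rw [Set.mem_Ioi] at hs
        rw [Real.norm_eq_abs, _root_.abs_of_nonneg (Real.rpow_nonneg (by linarith) _)]
        exact Real.rpow_le_rpow_of_nonpos (by linarith) (by linarith) (by linarith)
  apply Integrable.mono' ((hint.const_mul (C * (e ^ m)⁻¹)))
  · apply ContinuousOn.aestronglyMeasurable _ measurableSet_Ioi
    apply ContinuousOn.mul
    · apply ContinuousOn.mul continuousOn_const
      apply ContinuousOn.rpow_const (by fun_prop)
      intro s hs
      left
      rw [Set.mem_Ioi] at hs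
      intro h; linarith [h ▸ (by linarith : (0:ℝ) < 1 + s)]
    · apply ContinuousOn.inv₀ (by fun_prop)
      intro s hs
      rw [Set.mem_Ioi] at hs
      positivity
  · rw [ae_restrict_iff' measurableSet_Ioi]
    filter_upwards with s hs
    rw [Set.mem_Ioi] at hs
    rw [Real.norm_eq_abs, _root_.abs_of_nonneg (by positivity)]
    exact key s hs.le

open MeasureTheory Filter Complex Real

set_option maxHeartbeats 1000000 in
/-- Interchange of the Borel-transform limit `n → ∞` with the integral over `s`,
valid when `cos θ > 0`, for a spectral function with polynomial bound. -/
theorem borel_limit_integral_interchange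
    (M2 : ℝ) (hM2 : 0 < M2) (θ : ℝ) (hθ : 0 < Real.cos θ)
    (ρ : ℝ → ℝ) (hρc : ContinuousOn ρ (Set.Ici 0))
    (C p : ℝ) (hC : 0 ≤ C) (hp : 0 ≤ p)
    (hρ : ∀ s : ℝ, 0 ≤ s → 0 ≤ ρ s ∧ ρ s ≤ C * (1 + s) ^ p) :
    (∀ n : ℕ, p < (n : ℝ) →
      IntegrableOn
        (fun s : ℝ =>
          ((1 : ℂ) + (s : ℂ) * Complex.exp (-(θ * Complex.I)) / ((n : ℂ) * (M2 : ℂ))) ^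
              (-((n : ℤ) + 1)) * (ρ s : ℂ))
        (Set.Ioi 0)) ∧
    IntegrableOn
      (fun s : ℝ =>
        Complex.exp (-((s : ℂ) * Complex.exp (-(θ * Complex.I))) / (M2 : ℂ)) * (ρ s : ℂ))
      (Set.Ioi 0) ∧
    Tendsto
      (fun n : ℕ =>
        ∫ s in Set.Ioi (0 : ℝ),
          ((1 : ℂ) + (s : ℂ) * Complex.exp (-(θ * Complex.I)) / ((n : ℂ) * (M2 : ℂ))) ^
              (-((n : ℤ) + 1)) * (ρ s : ℂ))
      atTop
      (nhds (∫ s in Set.Ioi (0 : ℝ),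
        Complex.exp (-((s : ℂ) * Complex.exp (-(θ * Complex.I))) / (M2 : ℂ)) * (ρ s : ℂ))) := by
  set c := Real.cos θ with hc
  set w := Complex.exp (-(↑θ * Complex.I)) with hw
  have hwre : w.re = c := by
    rw [hw, show -((θ:ℂ) * Complex.I) = ((-θ : ℝ) : ℂ) * Complex.I by push_cast; ring,
      Complex.exp_ofReal_mul_I_re, hc, Real.cos_neg]
  have hz_re : ∀ (n : ℕ) (s : ℝ),
      ((1:ℂ) + (s:ℂ) * w / ((n:ℂ) * (M2:ℂ))).re = 1 + s * c / (n * M2) := by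
    intro n s
    have h1 : ((s:ℂ) * w / ((n:ℂ) * (M2:ℂ))) = ((s / (n * M2) : ℝ) : ℂ) * w := by
      push_cast; ring
    rw [Complex.add_re, h1, Complex.re_ofReal_mul, Complex.one_re, hwre]
    ring
  have hz_pos : ∀ (n : ℕ) (s : ℝ), 0 ≤ s → (1:ℝ) ≤ 1 + s * c / (n * M2) := by
    intro n s hs
    have h0 : (0:ℝ) ≤ s * c / (n * M2) := by positivity
    linarith
  have hz_norm : ∀ (n : ℕ) (s : ℝ),
      1 + s * c / (n * M2) ≤ ‖(1:ℂ) + (s:ℂ) * w / ((n:ℂ) * (M2:ℂ))‖ := by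
    intro n s
    rw [← hz_re n s]
    exact Complex.re_le_norm _
  have hz_ne : ∀ (n : ℕ) (s : ℝ), 0 ≤ s → ((1:ℂ) + (s:ℂ) * w / ((n:ℂ) * (M2:ℂ))) ≠ 0 := by
    intro n s hs h
    have h1 := hz_re n s
    rw [h, Complex.zero_re] at h1
    have h2 := hz_pos n s hs
    linarith
  have hFnorm : ∀ (n : ℕ) (s : ℝ), 0 ≤ s →
      ‖((1:ℂ) + (s:ℂ) * w / ((n:ℂ) * (M2:ℂ))) ^ (-((n:ℤ) + 1)) * ((ρ s : ℝ) : ℂ)‖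
        = (‖(1:ℂ) + (s:ℂ) * w / ((n:ℂ) * (M2:ℂ))‖ ^ (n+1))⁻¹ * ρ s := by
    intro n s hs
    rw [norm_mul, Complex.norm_real, Real.norm_eq_abs,
      _root_.abs_of_nonneg (hρ s hs).1,
      show -((n:ℤ)+1) = -(((n+1:ℕ)):ℤ) by push_cast; ring, zpow_neg, zpow_natCast,
      norm_inv, norm_pow]
  have hF_bound : ∀ (n : ℕ) (s : ℝ), 0 ≤ s →
      ‖((1:ℂ) + (s:ℂ) * w / ((n:ℂ) * (M2:ℂ))) ^ (-((n:ℤ) + 1)) * ((ρ s : ℝ) : ℂ)‖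
        ≤ C * (1+s)^p * ((1 + s * c / (n * M2)) ^ (n+1))⁻¹ := by
    intro n s hs
    rw [hFnorm n s hs]
    have hr1 : (1:ℝ) ≤ 1 + s * c / (n * M2) := hz_pos n s hs
    have h1 : (‖(1:ℂ) + (s:ℂ) * w / ((n:ℂ) * (M2:ℂ))‖ ^ (n+1))⁻¹
        ≤ ((1 + s * c / (n * M2)) ^ (n+1))⁻¹ := by
      apply inv_anti₀ (by positivity)
      exact pow_le_pow_left₀ (by linarith) (hz_norm n s) _
    calc (‖(1:ℂ) + (s:ℂ) * w / ((n:ℂ) * (M2:ℂ))‖ ^ (n+1))⁻¹ * ρ s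
        ≤ ((1 + s * c / (n * M2)) ^ (n+1))⁻¹ * (C * (1+s)^p) :=
          mul_le_mul h1 (hρ s hs).2 (hρ s hs).1 (by positivity)
      _ = C * (1+s)^p * ((1 + s * c / (n * M2)) ^ (n+1))⁻¹ := by ring
  have hmeas : ∀ n : ℕ, AEStronglyMeasurable
      (fun s : ℝ => ((1:ℂ) + (s:ℂ) * w / ((n:ℂ) * (M2:ℂ))) ^ (-((n:ℤ) + 1)) * ((ρ s : ℝ) : ℂ))
      (volume.restrict (Set.Ioi 0)) := by
    intro n
    apply ContinuousOn.aestronglyMeasurable _ measurableSet_Ioi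
    apply ContinuousOn.mul
    · apply ContinuousOn.zpow₀ (by fun_prop)
      intro s hs
      exact Or.inl (hz_ne n s (le_of_lt (Set.mem_Ioi.mp hs)))
    · exact Complex.continuous_ofReal.comp_continuousOn
        (hρc.mono (Set.Ioi_subset_Ici le_rfl))
  have hf_meas : AEStronglyMeasurable
      (fun s : ℝ => Complex.exp (-((s:ℂ) * w) / (M2:ℂ)) * ((ρ s : ℝ) : ℂ))
      (volume.restrict (Set.Ioi 0)) := by
    apply ContinuousOn.aestronglyMeasurable _ measurableSet_Ioi
    apply ContinuousOn.mul (by fun_prop)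
    exact Complex.continuous_ofReal.comp_continuousOn
      (hρc.mono (Set.Ioi_subset_Ici le_rfl))
  have hlim : ∀ s ∈ Set.Ioi (0:ℝ), Tendsto
      (fun n : ℕ => ((1:ℂ) + (s:ℂ) * w / ((n:ℂ) * (M2:ℂ))) ^ (-((n:ℤ) + 1)) * ((ρ s : ℝ) : ℂ))
      atTop (nhds (Complex.exp (-((s:ℂ) * w) / (M2:ℂ)) * ((ρ s : ℝ) : ℂ))) := by
    intro s hs
    rw [Set.mem_Ioi] at hs
    have ha : (0:ℝ) < ((s:ℂ) * w / (M2:ℂ)).re := by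
      have h1 : ((s:ℂ) * w / (M2:ℂ)) = ((s / M2 : ℝ):ℂ) * w := by push_cast; ring
      rw [h1, Complex.re_ofReal_mul, hwre]
      positivity
    rw [show -((s:ℂ) * w) / (M2:ℂ) = -((s:ℂ) * w / (M2:ℂ)) from neg_div _ _]
    apply ((borel_aux_tendsto _ ha).mul_const ((ρ s : ℝ):ℂ)).congr
    intro n
    have hzz : ((s:ℂ) * w / (M2:ℂ)) / (n:ℂ) = (s:ℂ) * w / ((n:ℂ) * (M2:ℂ)) := by
      rw [div_div, mul_comm ((M2:ℂ)) ((n:ℂ))]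
    rw [hzz]
  -- dominating function for large n
  set N := ⌈p⌉₊ + 2 with hN
  have hN1 : 1 ≤ N := by omega
  have hpN : p + 1 < (N:ℝ) := by
    have := Nat.le_ceil p
    rw [hN]
    push_cast
    linarith
  have hdg : (0:ℝ) < c / (2 * N * M2) := by positivity
  set g : ℝ → ℝ := fun s => C * (1 + s) ^ p * ((1 + s * (c / (2 * N * M2))) ^ N)⁻¹ with hg
  have hg_int : IntegrableOn g (Set.Ioi 0) :=
    borel_aux_integrable C p _ hC hp hdg N (by linarith)
  have hFg : ∀ n : ℕ, 2 * N ≤ n → ∀ s : ℝ, 0 < s →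
      ‖((1:ℂ) + (s:ℂ) * w / ((n:ℂ) * (M2:ℂ))) ^ (-((n:ℤ) + 1)) * ((ρ s : ℝ) : ℂ)‖ ≤ g s := by
    intro n hn s hs
    refine (hF_bound n s hs.le).trans ?_
    rw [hg]
    simp only
    have hx : (0:ℝ) ≤ s * c / M2 := by positivity
    have hmono := borel_aux_pow_mono N n hN1 hn (s * c / M2) hx
    have e1 : s * c / M2 / (2 * (N:ℝ)) = s * (c / (2 * N * M2)) := by
      field_simp
    have e2 : s * c / M2 / (n:ℝ) = s * c / (n * M2) := by
      rw [div_div]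
      ring_nf
    rw [e1, e2] at hmono
    have hA : (0:ℝ) < (1 + s * (c / (2 * N * M2))) ^ N := by positivity
    exact mul_le_mul_of_nonneg_left (inv_anti₀ hA hmono) (by positivity)
  refine ⟨?_, ?_, ?_⟩
  · -- (i)
    intro n hn
    have hn0 : (0:ℝ) < n := lt_of_le_of_lt hp hn
    have hd : (0:ℝ) < c / (n * M2) := by positivity
    have hint := borel_aux_integrable C p (c / (n * M2)) hC hp hd (n+1)
      (by push_cast; linarith)
    apply Integrable.mono' hint (hmeas n)
    rw [ae_restrict_iff' measurableSet_Ioi]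
    filter_upwards with s hs
    rw [Set.mem_Ioi] at hs
    refine (hF_bound n s hs.le).trans_eq ?_
    rw [mul_div_assoc]
  · -- (ii)
    apply Integrable.mono' hg_int hf_meas
    rw [ae_restrict_iff' measurableSet_Ioi]
    filter_upwards with s hs
    rw [Set.mem_Ioi] at hs
    refine le_of_tendsto ((hlim s hs).norm) ?_
    filter_upwards [eventually_ge_atTop (2*N)] with n hn
    exact hFg n hn s hs
  · -- (iii)
    apply tendsto_integral_filter_of_dominated_convergence g
    · exact Eventually.of_forall hmeas
    · filter_upwards [eventually_ge_atTop (2*N)] with n hn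
      rw [ae_restrict_iff' measurableSet_Ioi]
      filter_upwards with s hs
      exact hFg n hn s (Set.mem_Ioi.mp hs)
    · exact hg_int
    · exact (ae_restrict_iff' measurableSet_Ioi).mpr (Eventually.of_forall hlim)
end

section
/- Let M² > 0, θ ∈ (−π, π), s ≥ 0 a real number, and k ≥ 1 an integer. Define f : (0,∞) → ℂ by f(X) = 1/(s + X e^{iθ})^k (note s + X e^{iθ} ≠ 0 for all X > 0). Then the Borel transform of f at Borel mass M² exists and equals lim_{n→∞} [(n M²)^n/(n−1)!] · (−1)^n · f^{(n)}(n M²) = [1/(k−1)!] · (M² e^{iθ})^{−k} · exp(−s/(M² e^{iθ})). -/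
open MeasureTheory Filter Complex Real

lemma aux_fact (k n : ℕ) (hk : 1 ≤ k) :
    (k - 1).factorial * ∏ i ∈ Finset.range n, (k + i) = (n + k - 1).factorial := by
  induction n with
  | zero => simp
  | succ n ih =>
    rw [Finset.prod_range_succ, ← mul_assoc, ih]
    have h1 : n + 1 + k - 1 = (n + k - 1) + 1 := by omega
    rw [h1, Nat.factorial_succ]
    have h2 : n + k - 1 + 1 = k + n := by omega
    rw [h2]; ring

lemma aux_exp (c : ℂ) :
    Tendsto (fun n : ℕ => (1 + c / n) ^ n) atTop (nhds (Complex.exp c)) := by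
  have h0 : Tendsto (fun n : ℕ => c / (n : ℂ)) atTop (nhds 0) := by
    rw [tendsto_zero_iff_norm_tendsto_zero]
    have := tendsto_const_div_atTop_nhds_zero_nat ‖c‖
    refine this.congr' ?_
    filter_upwards [eventually_ge_atTop 1] with n hn
    simp [norm_div]
  have hne : ∀ᶠ n : ℕ in atTop, (1 : ℂ) + c / n ≠ 0 := by
    filter_upwards [h0.eventually (Metric.ball_mem_nhds 0 one_pos)] with n hn h
    rw [dist_zero_right] at hn
    have : c / n = -1 := by linear_combination h
    rw [this] at hn; simp at hn
  rcases eq_or_ne c 0 with rfl | hc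
  · refine tendsto_const_nhds.congr ?_
    intro n; simp
  have hlog : HasDerivAt (fun z : ℂ => Complex.log (1 + z)) 1 0 := by
    have h1 : (1 : ℂ) ∈ Complex.slitPlane := by simp [Complex.slitPlane]
    have h1' : (1:ℂ) + 0 ∈ Complex.slitPlane := by simp [Complex.slitPlane]
    have h := (Complex.hasDerivAt_log h1').comp_const_add 1 0
    simpa using h
  have hslope := hasDerivAt_iff_tendsto_slope.mp hlog
  have h2 : Tendsto (fun n : ℕ => c / (n : ℂ)) atTop (nhdsWithin 0 {(0:ℂ)}ᶜ) := by
    refine tendsto_nhdsWithin_of_tendsto_nhds_of_eventually_within _ h0 ?_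
    filter_upwards [eventually_ge_atTop 1] with n hn
    have hn' : (n : ℂ) ≠ 0 := by exact_mod_cast Nat.cast_ne_zero.mpr (by omega)
    simp [div_ne_zero hc hn']
  have h3 : Tendsto (fun n : ℕ => (n : ℂ) * Complex.log (1 + c / n)) atTop (nhds c) := by
    have h4 := (hslope.comp h2).const_mul c
    rw [mul_one] at h4
    refine h4.congr' ?_
    filter_upwards [eventually_ge_atTop 1] with n hn
    have hn' : (n : ℂ) ≠ 0 := by exact_mod_cast Nat.cast_ne_zero.mpr (by omega)
    simp only [Function.comp_apply, slope_def_field]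
    rw [show (1:ℂ) + 0 = 1 by ring, Complex.log_one]
    field_simp
    ring_nf
    rw [mul_right_comm, mul_inv_cancel₀ hc, one_mul]
  have h5 := (Complex.continuous_exp.tendsto c).comp h3
  refine h5.congr' ?_
  filter_upwards [hne] with n hn
  simp only [Function.comp_apply]
  rw [Complex.exp_nat_mul, Complex.exp_log hn]

lemma aux_iter (s : ℝ) (e : ℂ) (k : ℕ)
    (hden : ∀ X : ℝ, 0 < X → (s : ℂ) + X * e ≠ 0) (n : ℕ) :
    ∀ X : ℝ, 0 < X →
      iteratedDeriv n (fun Y : ℝ => ((s : ℂ) + Y * e) ^ (-(k : ℤ))) X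
        = (-e) ^ n * (∏ i ∈ Finset.range n, ((k : ℂ) + i)) *
          ((s : ℂ) + X * e) ^ (-(k : ℤ) - n) := by
  induction n with
  | zero => intro X hX; simp
  | succ n ih =>
    intro X hX
    rw [iteratedDeriv_succ]
    have hev : iteratedDeriv n (fun Y : ℝ => ((s : ℂ) + Y * e) ^ (-(k : ℤ)))
        =ᶠ[nhds X] fun Y : ℝ => (-e) ^ n * (∏ i ∈ Finset.range n, ((k : ℂ) + i)) *
          ((s : ℂ) + Y * e) ^ (-(k : ℤ) - n) := by
      filter_upwards [isOpen_Ioi.mem_nhds hX] with Y hY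
      exact ih Y hY
    rw [hev.deriv_eq]
    have h1 : HasDerivAt (fun Y : ℝ => (s : ℂ) + Y * e) e X := by
      have := (Complex.ofRealCLM.hasDerivAt (x := X)).mul_const e
      simpa using this.const_add (s : ℂ)
    have h2 : HasDerivAt (fun z : ℂ => z ^ (-(k : ℤ) - n))
        (((-(k : ℤ) - n : ℤ) : ℂ) * ((s : ℂ) + X * e) ^ (-(k : ℤ) - n - 1)) ((s : ℂ) + X * e) :=
      hasDerivAt_zpow _ _ (Or.inl (hden X hX))
    have h3 : HasDerivAt (fun Y : ℝ => ((s : ℂ) + Y * e) ^ (-(k : ℤ) - n))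
        (((-(k : ℤ) - n : ℤ) : ℂ) * ((s : ℂ) + X * e) ^ (-(k : ℤ) - n - 1) * e) X := by
        have := h2.comp X h1; exact this
    have h4 := (h3.const_mul ((-e) ^ n * (∏ i ∈ Finset.range n, ((k : ℂ) + i)))).deriv
    rw [h4]
    rw [Finset.prod_range_succ, pow_succ]
    have hexp : -(k : ℤ) - n - 1 = -(k : ℤ) - (n + 1 : ℕ) := by push_cast; ring
    rw [hexp]
    push_cast
    ring

set_option maxHeartbeats 2000000 in
/-- Borel transform of `1/(s − z)^k` with `z = −X e^{iθ}`:
`B̂ (1/(s−z))^k = (1/(k−1)!) (M² e^{iθ})^{−k} e^{−s/(M² e^{iθ})}`. -/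
theorem borel_transform_cauchy_kernel_pow
    (M2 : ℝ) (hM2 : 0 < M2) (θ : ℝ) (hθ : θ ∈ Set.Ioo (-π) π)
    (s : ℝ) (hs : 0 ≤ s) (k : ℕ) (hk : 1 ≤ k)
    (f : ℝ → ℂ)
    (hf : ∀ X : ℝ, 0 < X →
      f X = 1 / ((s : ℂ) + (X : ℂ) * Complex.exp (θ * Complex.I)) ^ k) :
    Tendsto
      (fun n : ℕ =>
        (((n : ℂ) * (M2 : ℂ)) ^ n / (Nat.factorial (n - 1) : ℂ)) * (-1 : ℂ) ^ n *
          iteratedDeriv n f ((n : ℝ) * M2))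
      atTop
      (nhds ((1 / (Nat.factorial (k - 1) : ℂ)) *
        ((M2 : ℂ) * Complex.exp (θ * Complex.I)) ^ (-(k : ℤ)) *
        Complex.exp (-(s : ℂ) / ((M2 : ℂ) * Complex.exp (θ * Complex.I))))) := by
  set e : ℂ := Complex.exp (θ * Complex.I) with he_def
  have he : e ≠ 0 := Complex.exp_ne_zero _
  -- nonvanishing of the denominator
  have hden : ∀ X : ℝ, 0 < X → (s : ℂ) + X * e ≠ 0 := by
    intro X hX h
    have him : ((s : ℂ) + X * e).im = 0 := by rw [h]; simp
    have hXsin : X * Real.sin θ = 0 := by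
      have : e.im = Real.sin θ := by
        rw [he_def]; exact Complex.exp_ofReal_mul_I_im θ
      simpa [Complex.add_im, Complex.mul_im, this] using him
    have hsin : Real.sin θ = 0 := by
      rcases mul_eq_zero.mp hXsin with h' | h'
      · exact absurd h' (ne_of_gt hX)
      · exact h'
    have hθ0 : θ = 0 := (Real.sin_eq_zero_iff_of_lt_of_lt hθ.1 hθ.2).mp hsin
    have he1 : e = 1 := by rw [he_def, hθ0]; simp
    rw [he1, mul_one] at h
    have hre : s + X = 0 := by
      have := congrArg Complex.re h
      simpa using this
    linarith
  have hM2e : (M2 : ℂ) * e ≠ 0 := mul_ne_zero (by exact_mod_cast ne_of_gt hM2) he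
  set c : ℂ := (s : ℂ) / ((M2 : ℂ) * e) with hc_def
  -- the model sequence
  set b : ℕ → ℂ := fun n =>
    (1 / (Nat.factorial (k - 1) : ℂ)) * ((M2 : ℂ) * e) ^ (-(k : ℤ)) *
      (∏ j ∈ Finset.range k, (1 + (j : ℂ) / n)) * ((1 + c / n) ^ (n + k))⁻¹ with hb_def
  have hb : Tendsto b atTop (nhds ((1 / (Nat.factorial (k - 1) : ℂ)) *
      ((M2 : ℂ) * e) ^ (-(k : ℤ)) * Complex.exp (-(s : ℂ) / ((M2 : ℂ) * e)))) := by
    have hninv : Tendsto (fun n : ℕ => ((n : ℂ))⁻¹) atTop (nhds 0) := by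
      rw [tendsto_zero_iff_norm_tendsto_zero]
      refine (tendsto_const_div_atTop_nhds_zero_nat 1).congr' ?_
      filter_upwards [eventually_ge_atTop 1] with n hn
      simp [one_div]
    have hprod : Tendsto (fun n : ℕ => ∏ j ∈ Finset.range k, (1 + (j : ℂ) / n)) atTop
        (nhds 1) := by
      have : Tendsto (fun n : ℕ => ∏ j ∈ Finset.range k, (1 + (j : ℂ) / n)) atTop
          (nhds (∏ j ∈ Finset.range k, (1 : ℂ))) := by
        refine tendsto_finset_prod _ fun j _ => ?_
        have : Tendsto (fun n : ℕ => (1 : ℂ) + (j : ℂ) * ((n : ℂ))⁻¹) atTop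
            (nhds (1 + (j : ℂ) * 0)) := (tendsto_const_nhds.mul hninv).const_add 1
        simpa [div_eq_mul_inv] using this
      simpa using this
    have hpow : Tendsto (fun n : ℕ => ((1 + c / n) ^ (n + k))⁻¹) atTop
        (nhds (Complex.exp c)⁻¹) := by
      have h1 : Tendsto (fun n : ℕ => (1 + c / n) ^ n) atTop (nhds (Complex.exp c)) :=
        aux_exp c
      have h2 : Tendsto (fun n : ℕ => (1 + c / n) ^ k) atTop (nhds 1) := by
        have hone : Tendsto (fun n : ℕ => (1 + c * ((n : ℂ))⁻¹)) atTop (nhds (1 + c * 0)) :=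
          (tendsto_const_nhds.mul hninv).const_add 1
        have := (hone.pow k)
        simp only [mul_zero, add_zero, one_pow] at this
        refine this.congr fun n => by rw [div_eq_mul_inv]
      have h3 : Tendsto (fun n : ℕ => (1 + c / n) ^ (n + k)) atTop
          (nhds (Complex.exp c)) := by
        have := h1.mul h2
        rw [mul_one] at this
        refine this.congr fun n => by rw [← pow_add]
      exact h3.inv₀ (Complex.exp_ne_zero c)
    have := ((tendsto_const_nhds (x := (1 / (Nat.factorial (k - 1) : ℂ)) *
        ((M2 : ℂ) * e) ^ (-(k : ℤ)))).mul hprod).mul hpow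
    rw [mul_one] at this
    have hexp : (Complex.exp c)⁻¹ = Complex.exp (-(s : ℂ) / ((M2 : ℂ) * e)) := by
      rw [← Complex.exp_neg, hc_def, neg_div]
    rw [hexp] at this
    exact this
  refine hb.congr' ?_
  filter_upwards [eventually_ge_atTop 1] with n hn
  -- now prove b n = a n
  have hn0 : (n : ℂ) ≠ 0 := Nat.cast_ne_zero.mpr (by omega)
  have hX : (0 : ℝ) < (n : ℝ) * M2 := by positivity
  have hfg : f =ᶠ[nhds ((n : ℝ) * M2)]
      (fun Y : ℝ => ((s : ℂ) + Y * e) ^ (-(k : ℤ))) := by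
    filter_upwards [isOpen_Ioi.mem_nhds hX] with Y hY
    rw [hf Y hY, zpow_neg, zpow_natCast, one_div]
  rw [hfg.iteratedDeriv_eq n, aux_iter s e k hden n _ hX]
  -- abbreviations
  have hcast : (((n : ℝ) * M2 : ℝ) : ℂ) = (n : ℂ) * (M2 : ℂ) := by push_cast; ring
  rw [hcast]
  set w : ℂ := (s : ℂ) + (n : ℂ) * (M2 : ℂ) * e with hw_def
  have hw : w ≠ 0 := by
    have := hden ((n : ℝ) * M2) hX
    rw [hcast] at this; exact this
  have hnM2e : (n : ℂ) * (M2 : ℂ) * e ≠ 0 := mul_ne_zero (mul_ne_zero hn0 (by exact_mod_cast ne_of_gt hM2)) he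
  have hw_eq : w = ((n : ℂ) * (M2 : ℂ) * e) * (1 + c / n) := by
    rw [hw_def, hc_def]
    field_simp
    ring_nf
    rw [mul_inv_cancel_right₀ (by exact_mod_cast ne_of_gt hM2 : (M2 : ℂ) ≠ 0)]
  have h1c : (1 : ℂ) + c / n ≠ 0 := by
    intro h
    rw [hw_eq, h, mul_zero] at hw
    exact hw rfl
  -- factorial/product relation
  have hkey : ((k - 1).factorial : ℂ) * ∏ i ∈ Finset.range n, ((k : ℂ) + i)
      = ((n - 1).factorial : ℂ) * ∏ j ∈ Finset.range k, ((n : ℂ) + j) := by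
    have e3 : (k - 1).factorial * ∏ i ∈ Finset.range n, (k + i)
        = (n - 1).factorial * ∏ j ∈ Finset.range k, (n + j) := by
      rw [aux_fact k n hk, aux_fact n k hn]; congr 1; omega
    have := congrArg (Nat.cast : ℕ → ℂ) e3
    push_cast at this
    exact this
  -- rewrite b n's product
  have hbprod : (∏ j ∈ Finset.range k, (1 + (j : ℂ) / n))
      = (∏ j ∈ Finset.range k, ((n : ℂ) + j)) / (n : ℂ) ^ k := by
    have hcg : ∀ j ∈ Finset.range k, (1 + (j : ℂ) / n) = ((n : ℂ) + j) / n := by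
      intro j _; field_simp
    rw [Finset.prod_congr rfl hcg, Finset.prod_div_distrib, Finset.prod_const, Finset.card_range]
  -- turn the zpow into pow-inverses
  have hzpow1 : w ^ (-(k : ℤ) - n) = (w ^ (n + k))⁻¹ := by
    rw [show -(k : ℤ) - n = -((n + k : ℕ) : ℤ) by push_cast; ring, zpow_neg, zpow_natCast]
  have hzpow2 : ((M2 : ℂ) * e) ^ (-(k : ℤ)) = (((M2 : ℂ) * e) ^ k)⁻¹ := by
    rw [zpow_neg, zpow_natCast]
  have hwpow : w ^ (n + k) = ((n : ℂ) * (M2 : ℂ) * e) ^ (n + k) * (1 + c / n) ^ (n + k) := by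
    rw [hw_eq, mul_pow]
  rw [hb_def]
  simp only
  rw [hzpow1, hzpow2, hbprod, hwpow]
  have hfact1 : ((k - 1).factorial : ℂ) ≠ 0 := Nat.cast_ne_zero.mpr (Nat.factorial_ne_zero _)
  have hfact2 : ((n - 1).factorial : ℂ) ≠ 0 := Nat.cast_ne_zero.mpr (Nat.factorial_ne_zero _)
  have hM2c : (M2 : ℂ) ≠ 0 := by exact_mod_cast ne_of_gt hM2
  have hP : (∏ i ∈ Finset.range n, ((k : ℂ) + i))
      = ((n - 1).factorial : ℂ) * (∏ j ∈ Finset.range k, ((n : ℂ) + j)) / ((k - 1).factorial : ℂ) := by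
    rw [eq_div_iff hfact1]
    linear_combination hkey
  rw [hP]
  have hsign : ∀ A B C : ℂ, A * (-1 : ℂ) ^ n * ((-e) ^ n * B * C) = A * e ^ n * (B * C) := by
    intro A B C
    rw [neg_pow e n]
    have h9 : ((-1 : ℂ)) ^ n * (-1 : ℂ) ^ n = 1 := by
      rw [← mul_pow]; norm_num
    calc A * (-1 : ℂ) ^ n * ((-1 : ℂ) ^ n * e ^ n * B * C)
        = ((-1 : ℂ) ^ n * (-1 : ℂ) ^ n) * (A * e ^ n * (B * C)) := by ring
      _ = A * e ^ n * (B * C) := by rw [h9]; ring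
  rw [hsign]
  have hQ : (∏ j ∈ Finset.range k, ((n : ℂ) + j)) ≠ 0 := by
    refine Finset.prod_ne_zero_iff.mpr fun j _ => ?_
    have hcj : ((n : ℂ) + j) = ((n + j : ℕ) : ℂ) := by push_cast; ring
    rw [hcj]
    exact Nat.cast_ne_zero.mpr (by omega)
  generalize hu : (1 : ℂ) + c / (n : ℂ) = u at h1c ⊢
  generalize hQd : (∏ j ∈ Finset.range k, ((n : ℂ) + j)) = Q at hQ ⊢
  have hA : ((n : ℂ) * (M2 : ℂ) * e) ^ n ≠ 0 := pow_ne_zero _ hnM2e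
  trans (Q * ((Nat.factorial (k - 1) : ℂ))⁻¹ * (((n : ℂ)) ^ k)⁻¹ *
      (((M2 : ℂ) * e) ^ k)⁻¹ * (u ^ (n + k))⁻¹)
  · ring
  · symm
    calc _ = (((Nat.factorial (n - 1) : ℂ))⁻¹ * (Nat.factorial (n - 1) : ℂ)) *
            ((((n : ℂ) * (M2 : ℂ) * e) ^ n)⁻¹ * ((n : ℂ) * (M2 : ℂ) * e) ^ n) *
            (Q * ((Nat.factorial (k - 1) : ℂ))⁻¹ * (((n : ℂ)) ^ k)⁻¹ *
              (((M2 : ℂ) * e) ^ k)⁻¹ * (u ^ (n + k))⁻¹) := by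
          rw [pow_add ((n : ℂ) * (M2 : ℂ) * e) n k]
          ring
      _ = _ := by
          rw [inv_mul_cancel₀ hfact2, inv_mul_cancel₀ hA, one_mul, one_mul]
end

section
/- Let M² > 0, θ ∈ ℝ, and let k ≥ 1 be an integer. Define f : (0,∞) → ℂ by f(X) = 1/(−X e^{iθ})^k = (−1)^k e^{−ikθ} X^{−k}. Then the Borel transform of f at Borel mass M² exists and equals lim_{n→∞} [(n M²)^n/(n−1)!] · (−1)^n · f^{(n)}(n M²) = [(−1)^k/(k−1)!] · (M² e^{iθ})^{−k}. -/
open MeasureTheory Filter Complex Real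

lemma ascfac' (k : ℕ) (hk : 1 ≤ k) : ∀ n : ℕ,
    (∏ i ∈ Finset.range n, (k + i)) * (k - 1).factorial = (k + n - 1).factorial := by
  intro n
  induction n with
  | zero => simp
  | succ n ih =>
    rw [Finset.prod_range_succ, mul_right_comm, ih]
    rw [show k + (n + 1) - 1 = (k + n - 1) + 1 by omega, Nat.factorial_succ]
    rw [show k + n - 1 + 1 = k + n by omega, mul_comm]

lemma prod_swap_fact' (k n : ℕ) (hk : 1 ≤ k) (hn : 1 ≤ n) :
    (∏ i ∈ Finset.range n, (k + i)) * (k - 1).factorial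
      = (∏ j ∈ Finset.range k, (n + j)) * (n - 1).factorial := by
  rw [ascfac' k hk n, ascfac' n hn k, Nat.add_comm n k]

lemma key_deriv' (k : ℕ) (θ : ℝ) (f : ℝ → ℂ)
    (hf : ∀ X : ℝ, 0 < X →
      f X = 1 / (-(X : ℂ) * Complex.exp (θ * Complex.I)) ^ k) :
    ∀ n : ℕ, ∀ x : ℝ, 0 < x →
      iteratedDeriv n f x
        = ((-Complex.exp (θ * Complex.I)) ^ k)⁻¹
            * (∏ i ∈ Finset.range n, (-(k : ℂ) - i)) * (x : ℂ) ^ (-(k : ℤ) - n) := by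
  set c : ℂ := ((-Complex.exp (θ * Complex.I)) ^ k)⁻¹ with hc
  intro n
  induction n with
  | zero =>
    intro x hx
    have hx0 : (x : ℂ) ≠ 0 := Complex.ofReal_ne_zero.mpr hx.ne'
    rw [iteratedDeriv_zero, hf x hx]
    have : (-(x : ℂ) * Complex.exp (θ * Complex.I)) ^ k
        = (x : ℂ) ^ k * (-Complex.exp (θ * Complex.I)) ^ k := by
      rw [← mul_pow]; ring_nf
    simp only [Finset.prod_range_zero, mul_one, Nat.cast_zero, sub_zero]
    rw [this, zpow_neg, zpow_natCast, one_div, mul_inv, mul_comm]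
  | succ n ih =>
    intro x hx
    rw [iteratedDeriv_succ]
    have hev : iteratedDeriv n f =ᶠ[nhds x]
        fun y : ℝ => c * (∏ i ∈ Finset.range n, (-(k : ℂ) - i)) * (y : ℂ) ^ (-(k : ℤ) - n) := by
      filter_upwards [isOpen_Ioi.mem_nhds (show x ∈ Set.Ioi (0:ℝ) from hx)] with y hy
      exact ih y hy
    rw [hev.deriv_eq]
    have hx0 : (x : ℂ) ≠ 0 := Complex.ofReal_ne_zero.mpr hx.ne'
    have hd : HasDerivAt (fun y : ℝ => c * (∏ i ∈ Finset.range n, (-(k : ℂ) - i)) * (y : ℂ) ^ (-(k : ℤ) - n))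
        (c * (∏ i ∈ Finset.range n, (-(k : ℂ) - i))
          * (((-(k : ℤ) - n : ℤ) : ℂ) * (x : ℂ) ^ ((-(k : ℤ) - n) - 1))) x :=
      ((hasDerivAt_zpow (-(k : ℤ) - n) (x : ℂ) (Or.inl hx0)).comp_ofReal).const_mul _
    rw [hd.deriv, Finset.prod_range_succ,
      show (-(k : ℤ) - n - 1 : ℤ) = -(k : ℤ) - ((n:ℕ) + 1 : ℕ) by push_cast; ring]
    push_cast
    ring

/-- Borel transform of `(1/z)^k` with `z = −X e^{iθ}`:
`B̂ (1/z)^k = ((−1)^k/(k−1)!) (1/(M² e^{iθ}))^k`. -/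
theorem borel_transform_inverse_power
    (M2 : ℝ) (hM2 : 0 < M2) (θ : ℝ) (k : ℕ) (hk : 1 ≤ k)
    (f : ℝ → ℂ)
    (hf : ∀ X : ℝ, 0 < X →
      f X = 1 / (-(X : ℂ) * Complex.exp (θ * Complex.I)) ^ k) :
    Tendsto
      (fun n : ℕ =>
        (((n : ℂ) * (M2 : ℂ)) ^ n / (Nat.factorial (n - 1) : ℂ)) * (-1 : ℂ) ^ n *
          iteratedDeriv n f ((n : ℝ) * M2))
      atTop
      (nhds (((-1 : ℂ) ^ k / (Nat.factorial (k - 1) : ℂ)) *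
        ((M2 : ℂ) * Complex.exp (θ * Complex.I)) ^ (-(k : ℤ)))) := by
  set e : ℂ := Complex.exp (θ * Complex.I) with he
  set L : ℂ := ((-1 : ℂ) ^ k / (Nat.factorial (k - 1) : ℂ)) * ((M2 : ℂ) * e) ^ (-(k : ℤ)) with hL
  have he0 : e ≠ 0 := Complex.exp_ne_zero _
  have hM0 : (M2 : ℂ) ≠ 0 := Complex.ofReal_ne_zero.mpr hM2.ne'
  have hfk : ((k - 1).factorial : ℂ) ≠ 0 := Nat.cast_ne_zero.mpr (k-1).factorial_ne_zero
  -- the model sequence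
  have hlim : Tendsto (fun n : ℕ => L * ∏ j ∈ Finset.range k, (((n : ℂ) + j) / n))
      atTop (nhds L) := by
    have hprod : Tendsto (fun n : ℕ => ∏ j ∈ Finset.range k, (((n : ℂ) + j) / n))
        atTop (nhds (∏ _j ∈ Finset.range k, (1 : ℂ))) := by
      apply tendsto_finset_prod
      intro j _
      have h1 : Tendsto (fun n : ℕ => ((j : ℝ) / n)) atTop (nhds 0) :=
        tendsto_const_div_atTop_nhds_zero_nat (j : ℝ)
      have h2 : Tendsto (fun n : ℕ => ((j : ℂ) / n)) atTop (nhds 0) := by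
        have := (Complex.continuous_ofReal.tendsto 0).comp h1
        simpa [Function.comp_def] using this
      have h3 : Tendsto (fun n : ℕ => 1 + ((j : ℂ) / n)) atTop (nhds 1) := by
        simpa using h2.const_add 1
      apply h3.congr'
      filter_upwards [eventually_ge_atTop 1] with n hn
      have hn0 : (n : ℂ) ≠ 0 := Nat.cast_ne_zero.mpr (by omega)
      field_simp
    have := hprod.const_mul L
    simpa using this
  apply hlim.congr'
  filter_upwards [eventually_ge_atTop 1] with n hn
  have hn0 : (n : ℂ) ≠ 0 := Nat.cast_ne_zero.mpr (by omega)
  have hfn : ((n - 1).factorial : ℂ) ≠ 0 := Nat.cast_ne_zero.mpr (n-1).factorial_ne_zero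
  have hx : (0 : ℝ) < (n : ℝ) * M2 := by positivity
  have hA : (n : ℂ) * (M2 : ℂ) ≠ 0 := mul_ne_zero hn0 hM0
  have hfn1 : ((n : ℂ) * M2) ^ n ≠ 0 := pow_ne_zero _ hA
  have hfk1 : ((n : ℂ) * M2) ^ k ≠ 0 := pow_ne_zero _ hA
  have hP3 : (-1 : ℂ) ^ n * ∏ i ∈ Finset.range n, (-(k : ℂ) - i)
      = ∏ i ∈ Finset.range n, ((k : ℂ) + i) := by
    rw [show ((-1 : ℂ) ^ n) = ∏ _i ∈ Finset.range n, (-1 : ℂ) by simp,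
      ← Finset.prod_mul_distrib]
    exact Finset.prod_congr rfl fun i _ => by ring
  have hcast : (∏ i ∈ Finset.range n, ((k : ℂ) + i)) * ((k - 1).factorial : ℂ)
      = (∏ j ∈ Finset.range k, ((n : ℂ) + j)) * ((n - 1).factorial : ℂ) := by
    have h2 : ((((∏ i ∈ Finset.range n, (k + i)) * (k - 1).factorial : ℕ)) : ℂ)
        = (((∏ j ∈ Finset.range k, (n + j)) * (n - 1).factorial : ℕ) : ℂ) :=
      congrArg (Nat.cast : ℕ → ℂ) (prod_swap_fact' k n hk hn)
    push_cast at h2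
    exact h2
  have hQ : (∏ i ∈ Finset.range n, ((k : ℂ) + i))
      = (∏ j ∈ Finset.range k, ((n : ℂ) + j)) * ((n - 1).factorial : ℂ)
          / ((k - 1).factorial : ℂ) := by
    rw [eq_div_iff hfk]; exact hcast
  have hz2 : (((((n : ℝ)) * M2 : ℝ)) : ℂ) ^ (-(k : ℤ) - (n : ℕ))
      = (((n : ℂ) * (M2 : ℂ)) ^ k)⁻¹ * (((n : ℂ) * (M2 : ℂ)) ^ n)⁻¹ := by
    push_cast
    rw [show (-(k : ℤ) - (n : ℕ)) = -(((k + n : ℕ) : ℤ)) by push_cast; ring,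
      zpow_neg, zpow_natCast, pow_add, mul_inv]
  have hceq : ((-e) ^ k)⁻¹ = (-1 : ℂ) ^ k * (e ^ k)⁻¹ := by
    rw [show (-e) = (-1) * e by ring, mul_pow, mul_inv, ← inv_pow, inv_neg, inv_one]
  symm
  calc (((n : ℂ) * (M2 : ℂ)) ^ n / (Nat.factorial (n - 1) : ℂ)) * (-1 : ℂ) ^ n *
          iteratedDeriv n f ((n : ℝ) * M2)
      = ((-e) ^ k)⁻¹ * ((-1 : ℂ) ^ n * ∏ i ∈ Finset.range n, (-(k : ℂ) - i))
          * (((n : ℂ) * (M2 : ℂ)) ^ k)⁻¹ / ((n - 1).factorial : ℂ)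
          * (((n : ℂ) * (M2 : ℂ)) ^ n * ((((n : ℂ) * (M2 : ℂ)) ^ n)⁻¹)) := by
        rw [key_deriv' k θ f hf n ((n : ℝ) * M2) hx, hz2]
        ring
    _ = ((-e) ^ k)⁻¹ * (∏ i ∈ Finset.range n, ((k : ℂ) + i))
          * (((n : ℂ) * (M2 : ℂ)) ^ k)⁻¹ / ((n - 1).factorial : ℂ) := by
        rw [hP3, mul_inv_cancel₀ hfn1, mul_one]
    _ = L * ∏ j ∈ Finset.range k, (((n : ℂ) + j) / n) := by
        rw [hQ, hceq, hL, zpow_neg, zpow_natCast,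
          Finset.prod_div_distrib, Finset.prod_const, Finset.card_range, mul_pow, mul_pow]
        have hek : e ^ k ≠ 0 := pow_ne_zero _ he0
        have hnk : ((n : ℂ)) ^ k ≠ 0 := pow_ne_zero _ hn0
        have hMk : ((M2 : ℂ)) ^ k ≠ 0 := pow_ne_zero _ hM0
        field_simp
end

section
/- Let M² > 0, μ² > 0 be real numbers, θ ∈ (−π, π], and let k ≥ 0 be an integer. Define f : (0,∞) → ℂ by f(X) = (−X e^{iθ})^k · (log(X/μ²) + iθ), where log denotes the real logarithm, i.e. f(X) = z^k ln(−z/μ²) for z = −X e^{iθ} with the principal branch of the logarithm. Then the Borel transform of f at Borel mass M² exists and equals lim_{n→∞} [(n M²)^n/(n−1)!] · (−1)^n · f^{(n)}(n M²) = −k! · (M² e^{iθ})^k. -/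
open MeasureTheory Filter Complex Real

private lemma eqOn_iteratedDeriv {f g : ℝ → ℂ} (h : Set.EqOn f g (Set.Ioi 0)) (n : ℕ) :
    Set.EqOn (iteratedDeriv n f) (iteratedDeriv n g) (Set.Ioi 0) := by
  induction n with
  | zero => simpa using h
  | succ n ih =>
    intro x hx
    rw [iteratedDeriv_succ, iteratedDeriv_succ]
    exact Filter.EventuallyEq.deriv_eq
      (Filter.eventuallyEq_of_mem (isOpen_Ioi.mem_nhds hx) ih)

private lemma deriv_congr_Ioi {h φ : ℝ → ℂ} (heq : ∀ x : ℝ, 0 < x → h x = φ x)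
    {x : ℝ} (hx : 0 < x) : deriv h x = deriv φ x :=
  Filter.EventuallyEq.deriv_eq
    (Filter.eventuallyEq_of_mem (isOpen_Ioi.mem_nhds hx) fun y hy => heq y hy)

/-- derivative of `b * x^p * (log x + c) + a * x^p` on positive reals. -/
private lemma hasDerivAt_F (b a c : ℂ) (p : ℤ) {x : ℝ} (hx : 0 < x) :
    HasDerivAt (fun y : ℝ => b * (y : ℂ) ^ p * ((Real.log y : ℂ) + c) + a * (y : ℂ) ^ p)
      (b * p * (x : ℂ) ^ (p - 1) * ((Real.log x : ℂ) + c) + (b + a * p) * (x : ℂ) ^ (p - 1)) x := by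
  have hx0 : (x : ℂ) ≠ 0 := by exact_mod_cast hx.ne'
  have h1 : HasDerivAt (fun y : ℝ => (y : ℂ) ^ p) ((p : ℂ) * (x : ℂ) ^ (p - 1)) x :=
    (hasDerivAt_zpow p (x : ℂ) (Or.inl hx0)).comp_ofReal
  have h2 : HasDerivAt (fun y : ℝ => ((Real.log y : ℂ) + c)) (((x⁻¹ : ℝ) : ℂ)) x := by
    simpa using ((Real.hasDerivAt_log hx.ne').ofReal_comp).add_const c
  have := ((h1.const_mul b).mul h2).add (h1.const_mul a)
  refine this.congr_deriv ?_
  have hpow : (x : ℂ) ^ (p - 1) = (x : ℂ) ^ p * (x : ℂ)⁻¹ := zpow_sub_one₀ hx0 p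
  rw [hpow]
  push_cast [Complex.ofReal_inv]
  ring

private lemma phase1 (A c : ℂ) (k : ℕ) : ∀ j, j ≤ k → ∃ a : ℂ, ∀ x : ℝ, 0 < x →
    iteratedDeriv j (fun y : ℝ => A * (y : ℂ) ^ (k : ℤ) * ((Real.log y : ℂ) + c)) x
      = A * (Nat.descFactorial k j : ℂ) * (x : ℂ) ^ ((k : ℤ) - j) * ((Real.log x : ℂ) + c)
        + a * (x : ℂ) ^ ((k : ℤ) - j) := by
  intro j
  induction j with
  | zero =>
    intro _
    exact ⟨0, fun x _ => by simp⟩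
  | succ j ih =>
    intro hjk
    obtain ⟨a, ha⟩ := ih (Nat.le_of_succ_le hjk)
    refine ⟨A * (Nat.descFactorial k j : ℂ) + a * ((k : ℂ) - j), fun x hx => ?_⟩
    rw [iteratedDeriv_succ,
      deriv_congr_Ioi (φ := fun y : ℝ =>
        (A * (Nat.descFactorial k j : ℂ)) * (y : ℂ) ^ ((k : ℤ) - j) * ((Real.log y : ℂ) + c)
          + a * (y : ℂ) ^ ((k : ℤ) - j)) (fun y hy => by rw [ha y hy]) hx,
      (hasDerivAt_F (A * (Nat.descFactorial k j : ℂ)) a c ((k : ℤ) - j) hx).deriv]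
    have hsub : ((k - j : ℕ) : ℂ) = (k : ℂ) - j := by
      push_cast [Nat.cast_sub (Nat.le_of_succ_le hjk)]; ring
    have hexp : ((k : ℤ) - (j + 1 : ℕ)) = ((k : ℤ) - j) - 1 := by push_cast; ring
    rw [hexp, Nat.descFactorial_succ]
    push_cast [hsub]
    ring

private lemma phase2 (A c : ℂ) (k : ℕ) : ∀ m : ℕ, ∀ x : ℝ, 0 < x →
    iteratedDeriv (k + 1 + m) (fun y : ℝ => A * (y : ℂ) ^ (k : ℤ) * ((Real.log y : ℂ) + c)) x
      = A * (Nat.factorial k : ℂ) * (-1) ^ m * (Nat.factorial m : ℂ)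
        * (x : ℂ) ^ (-(m + 1 : ℤ)) := by
  intro m
  induction m with
  | zero =>
    intro x hx
    obtain ⟨a, ha⟩ := phase1 A c k k le_rfl
    rw [iteratedDeriv_succ,
      deriv_congr_Ioi (φ := fun y : ℝ =>
        (A * (Nat.descFactorial k k : ℂ)) * (y : ℂ) ^ ((k : ℤ) - k) * ((Real.log y : ℂ) + c)
          + a * (y : ℂ) ^ ((k : ℤ) - k)) (fun y hy => by rw [ha y hy]) hx,
      (hasDerivAt_F (A * (Nat.descFactorial k k : ℂ)) a c ((k : ℤ) - k) hx).deriv]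
    rw [Nat.descFactorial_self]
    simp
  | succ m ih =>
    intro x hx
    have : k + 1 + (m + 1) = (k + 1 + m) + 1 := by ring
    rw [this, iteratedDeriv_succ,
      deriv_congr_Ioi (φ := fun y : ℝ =>
        (0 : ℂ) * (y : ℂ) ^ (-(m + 1 : ℤ)) * ((Real.log y : ℂ) + c)
          + (A * (Nat.factorial k : ℂ) * (-1) ^ m * (Nat.factorial m : ℂ))
            * (y : ℂ) ^ (-(m + 1 : ℤ))) (fun y hy => by rw [ih y hy]; ring) hx,
      (hasDerivAt_F 0 _ c (-(m + 1 : ℤ)) hx).deriv]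
    have hexp : (-(m + 1 : ℤ) - 1) = -((m : ℤ) + 1 + 1) := by ring
    rw [hexp]
    push_cast [Nat.factorial_succ]
    ring

private lemma ratio_tendsto (k : ℕ) :
    Tendsto (fun n : ℕ => (n : ℝ) ^ k / ((n - 1).descFactorial k : ℝ)) atTop (nhds 1) := by
  induction k with
  | zero => simpa using tendsto_const_nhds
  | succ k ih =>
    have hden : Tendsto (fun n : ℕ => (n : ℝ) - (k + 1)) atTop atTop :=
      tendsto_atTop_add_const_right _ _ tendsto_natCast_atTop_atTop
    have h0 : Tendsto (fun n : ℕ => ((k : ℝ) + 1) / ((n : ℝ) - (k + 1))) atTop (nhds 0) :=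
      tendsto_const_nhds.div_atTop hden
    have hfac : Tendsto (fun n : ℕ => (n : ℝ) / ((n : ℝ) - (k + 1))) atTop (nhds 1) := by
      have h1 : Tendsto (fun n : ℕ => 1 + ((k : ℝ) + 1) / ((n : ℝ) - (k + 1))) atTop
          (nhds 1) := by simpa using tendsto_const_nhds.add h0
      refine h1.congr' ?_
      filter_upwards [eventually_ge_atTop (k + 2)] with n hn
      have hne : (n : ℝ) - (k + 1) ≠ 0 := by
        have : (k + 2 : ℝ) ≤ (n : ℝ) := by exact_mod_cast hn
        nlinarith
      field_simp
      ring
    have := hfac.mul ih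
    rw [one_mul] at this
    refine this.congr' ?_
    filter_upwards [eventually_ge_atTop (k + 2)] with n hn
    have h1 : n - 1 - k = n - (k + 1) := by omega
    have h2 : ((n - (k + 1) : ℕ) : ℝ) = (n : ℝ) - (k + 1) := by
      have : k + 1 ≤ n := by omega
      push_cast [Nat.cast_sub this]; ring
    rw [Nat.descFactorial_succ, h1]
    push_cast [h2]
    rw [pow_succ]
    by_cases hd : ((n - 1).descFactorial k : ℝ) = 0
    · simp [hd]
    · have hne : (n : ℝ) - (k + 1) ≠ 0 := by
        have : (k + 2 : ℝ) ≤ (n : ℝ) := by exact_mod_cast hn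
        nlinarith
      field_simp

/-- Borel transform of `z^k ln(−z/μ²)` with `z = −X e^{iθ}` (principal logarithm):
`B̂ z^k ln(−z/μ²) = −k! (M² e^{iθ})^k`. -/
theorem borel_transform_log_power
    (M2 μ2 : ℝ) (hM2 : 0 < M2) (hμ2 : 0 < μ2)
    (θ : ℝ) (hθ : θ ∈ Set.Ioc (-π) π) (k : ℕ)
    (f : ℝ → ℂ)
    (hf : ∀ X : ℝ, 0 < X →
      f X = (-(X : ℂ) * Complex.exp (θ * Complex.I)) ^ k *
        ((Real.log (X / μ2) : ℂ) + θ * Complex.I)) :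
    Tendsto
      (fun n : ℕ =>
        (((n : ℂ) * (M2 : ℂ)) ^ n / (Nat.factorial (n - 1) : ℂ)) * (-1 : ℂ) ^ n *
          iteratedDeriv n f ((n : ℝ) * M2))
      atTop
      (nhds (-(Nat.factorial k : ℂ) * ((M2 : ℂ) * Complex.exp (θ * Complex.I)) ^ k)) := by
  set e : ℂ := Complex.exp (θ * Complex.I) with he
  set A : ℂ := (-e) ^ k with hA
  set c : ℂ := θ * Complex.I - (Real.log μ2 : ℂ) with hc
  set g : ℝ → ℂ := fun y : ℝ => A * (y : ℂ) ^ (k : ℤ) * ((Real.log y : ℂ) + c) with hg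
  have hfg : Set.EqOn f g (Set.Ioi 0) := by
    intro x hx
    rw [Set.mem_Ioi] at hx
    rw [hf x hx, hg, hA, hc]
    simp only [Real.log_div hx.ne' hμ2.ne']
    push_cast
    rw [zpow_natCast]
    ring
  set C : ℂ := -(Nat.factorial k : ℂ) * ((M2 : ℂ) * e) ^ k with hC
  have hE : ∀ n : ℕ, k + 1 ≤ n →
      (((n : ℂ) * (M2 : ℂ)) ^ n / (Nat.factorial (n - 1) : ℂ)) * (-1 : ℂ) ^ n *
          iteratedDeriv n f ((n : ℝ) * M2)
        = C * ((((n : ℝ) ^ k / ((n - 1).descFactorial k : ℝ)) : ℝ) : ℂ) := by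
    intro n hn
    obtain ⟨m, rfl⟩ : ∃ m, n = k + 1 + m := ⟨n - (k + 1), by omega⟩
    set n := k + 1 + m
    have hx : (0 : ℝ) < (n : ℝ) * M2 := by
      apply mul_pos _ hM2
      exact_mod_cast Nat.pos_of_ne_zero (by omega)
    have hxC : ((((n : ℝ) * M2 : ℝ)) : ℂ) = (n : ℂ) * (M2 : ℂ) := by push_cast; ring
    rw [eqOn_iteratedDeriv hfg n (Set.mem_Ioi.2 hx), hg, phase2 A c k m _ hx]
    have hn1 : n - 1 = k + m := by omega
    have hfac : (Nat.factorial (k + m) : ℂ)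
        = (Nat.factorial m : ℂ) * ((k + m).descFactorial k : ℂ) := by
      have := Nat.factorial_mul_descFactorial (Nat.le_add_right k m)
      simp only [Nat.add_sub_cancel_left] at this
      exact_mod_cast this.symm
    set w : ℂ := (n : ℂ) * (M2 : ℂ) with hw
    have hw0 : w ≠ 0 := by
      apply mul_ne_zero
      · exact_mod_cast (by omega : n ≠ 0)
      · exact_mod_cast hM2.ne'
    have hzpow : ((((n : ℝ) * M2 : ℝ)) : ℂ) ^ (-(m + 1 : ℤ)) = (w ^ (m + 1))⁻¹ := by
      rw [hxC]
      rw [show (-((m : ℤ) + 1)) = -((m + 1 : ℕ) : ℤ) by push_cast; ring,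
        zpow_neg, zpow_natCast]
    rw [hzpow, hn1, hfac]
    have hpow : w ^ n = w ^ k * w ^ (m + 1) := by
      rw [← pow_add]; congr 1; omega
    have hsgn : ((-1 : ℂ)) ^ n = (-1) ^ k * (-1) * (-1) ^ m := by
      rw [show n = k + 1 + m from rfl, pow_add, pow_add, pow_one]
    have hAe : A * (-1 : ℂ) ^ k = e ^ k := by
      rw [hA, ← mul_pow]; norm_num
    have hdesc0 : (((k + m).descFactorial k : ℕ) : ℂ) ≠ 0 := by
      have : (k + m).descFactorial k ≠ 0 := by
        simp only [ne_eq, Nat.descFactorial_eq_zero_iff_lt]; omega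
      exact_mod_cast this
    have hm0 : ((Nat.factorial m : ℕ) : ℂ) ≠ 0 := by
      exact_mod_cast (Nat.factorial_pos m).ne'
    have hwp : w ^ (m + 1) ≠ 0 := pow_ne_zero _ hw0
    rw [hpow, hsgn, hC]
    push_cast
    field_simp
    ring_nf
    simp [pow_mul', neg_one_sq]
    rw [show w ^ k * A * ↑k.factorial * (-1 : ℂ) ^ k = w ^ k * ↑k.factorial * (A * (-1) ^ k) by ring, hAe, hw]
    ring
  have hlim : Tendsto (fun n : ℕ =>
      C * ((((n : ℝ) ^ k / ((n - 1).descFactorial k : ℝ)) : ℝ) : ℂ)) atTop (nhds C) := by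
    have := (Complex.continuous_ofReal.tendsto 1).comp (ratio_tendsto k)
    have h2 := this.const_mul C
    simpa using h2
  have : Tendsto
      (fun n : ℕ =>
        (((n : ℂ) * (M2 : ℂ)) ^ n / (Nat.factorial (n - 1) : ℂ)) * (-1 : ℂ) ^ n *
          iteratedDeriv n f ((n : ℝ) * M2)) atTop (nhds C) := by
    refine hlim.congr' ?_
    filter_upwards [eventually_ge_atTop (k + 1)] with n hn
    exact (hE n hn).symm
  simpa [hC, he] using this
end

section
/- Let M² > 0 be a real number, θ ∈ ℝ with cos θ ≥ 0, let s ≥ 0 be real and n ≥ 1 a natural number. Then the complex number (1 + s e^{−iθ}/(n M²))^{−(n+1)} satisfies the bound ‖(1 + s e^{−iθ}/(n M²))^{−(n+1)}‖ ≤ (1 + 2 s cos θ/(n M²))^{−n/2}. -/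
open Complex Real

/-- The domination estimate of Appendix B:
`‖(1 + s e^{−iθ}/(n M²))^{−(n+1)}‖ ≤ (1 + 2 s cos θ/(n M²))^{−n/2}` for `cos θ ≥ 0`. -/
theorem kernel_domination_bound
    (M2 : ℝ) (hM2 : 0 < M2) (θ : ℝ) (hθ : 0 ≤ Real.cos θ)
    (s : ℝ) (hs : 0 ≤ s) (n : ℕ) (hn : 1 ≤ n) :
    ‖((1 : ℂ) + (s : ℂ) * Complex.exp (-(θ * Complex.I)) / ((n : ℂ) * (M2 : ℂ))) ^
        (-((n : ℤ) + 1))‖ ≤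
      (1 + 2 * s * Real.cos θ / ((n : ℝ) * M2)) ^ (-(n : ℝ) / 2) := by
  have hn0 : (0:ℝ) < n := by exact_mod_cast Nat.pos_of_ne_zero (by omega)
  have hnM : (0:ℝ) < n * M2 := mul_pos hn0 hM2
  set a : ℝ := 2 * s * Real.cos θ / ((n : ℝ) * M2) with ha_def
  have ha : 0 ≤ a := by positivity
  have h1a : (1:ℝ) ≤ 1 + a := by linarith
  set w : ℂ := (s : ℂ) * Complex.exp (-(θ * Complex.I)) / ((n : ℂ) * (M2 : ℂ)) with hw
  -- compute the real part of w
  have hw_eq : w = ((s / (n * M2) : ℝ) : ℂ) * Complex.exp ((-θ : ℝ) * Complex.I) := by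
    rw [hw]
    push_cast
    ring_nf
  have hre : w.re = s / (n * M2) * Real.cos θ := by
    rw [hw_eq, Complex.mul_re, Complex.ofReal_re, Complex.ofReal_im,
      Complex.exp_ofReal_mul_I_re, Real.cos_neg]
    ring
  -- normSq lower bound
  have hsq : 1 + a ≤ Complex.normSq (1 + w) := by
    have h1 : Complex.normSq (1 + w) = 1 + 2 * w.re + Complex.normSq w := by
      simp [Complex.normSq_add, Complex.normSq_apply, Complex.add_re, Complex.add_im]
      ring
    have h2 : 0 ≤ Complex.normSq w := Complex.normSq_nonneg w
    have h3 : a = 2 * w.re := by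
      rw [hre, ha_def]; field_simp
    rw [h1, h3]; linarith
  have hnorm : Real.sqrt (1 + a) ≤ ‖1 + w‖ := by
    rw [Complex.norm_def]
    exact Real.sqrt_le_sqrt hsq
  have hsqrt_pos : 0 < Real.sqrt (1 + a) := Real.sqrt_pos.mpr (by linarith)
  have hnorm_pos : 0 < ‖1 + w‖ := lt_of_lt_of_le hsqrt_pos hnorm
  have key : ‖(1 + w) ^ (-((n : ℤ) + 1))‖ = ‖1 + w‖ ^ ((-((n:ℝ) + 1))) := by
    rw [norm_zpow, ← Real.rpow_intCast]
    push_cast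
    ring_nf
  rw [key]
  have step1 : ‖1 + w‖ ^ (-((n:ℝ) + 1)) ≤ Real.sqrt (1 + a) ^ (-((n:ℝ) + 1)) := by
    apply Real.rpow_le_rpow_of_nonpos hsqrt_pos hnorm
    have : (0:ℝ) ≤ (n:ℝ) + 1 := by positivity
    linarith
  have step2 : Real.sqrt (1 + a) ^ (-((n:ℝ) + 1)) = (1 + a) ^ (-((n:ℝ) + 1) / 2) := by
    rw [Real.sqrt_eq_rpow, ← Real.rpow_mul (by linarith : (0:ℝ) ≤ 1 + a)]
    congr 1
    ring
  have step3 : (1 + a) ^ (-((n:ℝ) + 1) / 2) ≤ (1 + a) ^ (-(n:ℝ) / 2) := by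
    apply Real.rpow_le_rpow_of_exponent_le h1a
    linarith
  calc ‖1 + w‖ ^ (-((n:ℝ) + 1)) ≤ Real.sqrt (1 + a) ^ (-((n:ℝ) + 1)) := step1
    _ = (1 + a) ^ (-((n:ℝ) + 1) / 2) := step2
    _ ≤ (1 + a) ^ (-(n:ℝ) / 2) := step3
end
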